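/- arXiv:1112.5380 — 4 statements merged into one kernel-verified Lean document; each statement's English description precedes it below -/
import Mathlib

section
/- Let f(y) = ln cosh(y + βh) for fixed β > 0 and h ∈ ℝ. Then for |x| < 1, the Legendre–Fenchel transform satisfies f*(x) = sup_y {xy − f(y)} = I₀(x) − βhx, where I₀(x) = ((1+x)/2) ln(1+x) + ((1−x)/2) ln(1−x). -/
open Real

lemma log_concave2 {p q a b : ℝ} (hp : 0 < p) (hq : 0 < q) (hpq : p + q = 1)
    (ha : 0 < a) (hb : 0 < b) :
    p * Real.log a + q * Real.log b ≤ Real.log (p * a + q * b) := by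
  set s := p * a + q * b with hs
  have hs0 : 0 < s := by positivity
  have h1 : Real.log a - Real.log s ≤ a / s - 1 := by
    have := Real.log_le_sub_one_of_pos (show 0 < a / s by positivity)
    rwa [Real.log_div ha.ne' hs0.ne'] at this
  have h2 : Real.log b - Real.log s ≤ b / s - 1 := by
    have := Real.log_le_sub_one_of_pos (show 0 < b / s by positivity)
    rwa [Real.log_div hb.ne' hs0.ne'] at this
  have key : p * (Real.log a - Real.log s) + q * (Real.log b - Real.log s)
      ≤ p * (a / s - 1) + q * (b / s - 1) := by gcongr
  have hsum : p * (a / s - 1) + q * (b / s - 1) = 0 := by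
    have : p * (a / s) + q * (b / s) = 1 := by
      rw [mul_div_assoc'] at *
      field_simp
      exact hs.symm
    nlinarith [this, hpq]
  have e : p * (Real.log a - Real.log s) + q * (Real.log b - Real.log s)
      = p * Real.log a + q * Real.log b - (p + q) * Real.log s := by ring
  rw [hpq, one_mul] at e
  linarith [key, hsum, e.symm.le, e.le]

lemma ub {x : ℝ} (hx : |x| < 1) (z : ℝ) :
    x * z - Real.log (Real.cosh z)
      ≤ (1 + x) / 2 * Real.log (1 + x) + (1 - x) / 2 * Real.log (1 - x) := by
  have hx1 : -1 < x := (abs_lt.mp hx).1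
  have hx2 : x < 1 := (abs_lt.mp hx).2
  set p := (1 + x) / 2 with hp
  set q := (1 - x) / 2 with hq
  have hp0 : 0 < p := by rw [hp]; linarith
  have hq0 : 0 < q := by rw [hq]; linarith
  have hpq : p + q = 1 := by rw [hp, hq]; ring
  have hpmq : p - q = x := by rw [hp, hq]; ring
  have ha : (0:ℝ) < Real.exp z / p := by positivity
  have hb : (0:ℝ) < Real.exp (-z) / q := by positivity
  have key := log_concave2 hp0 hq0 hpq ha hb
  have hsum : p * (Real.exp z / p) + q * (Real.exp (-z) / q) = 2 * Real.cosh z := by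
    rw [Real.cosh_eq]; field_simp
  rw [hsum, Real.log_div (Real.exp_pos z).ne' hp0.ne',
      Real.log_div (Real.exp_pos (-z)).ne' hq0.ne', Real.log_exp, Real.log_exp,
      Real.log_mul two_ne_zero (Real.cosh_pos z).ne'] at key
  have hlp : Real.log p = Real.log (1 + x) - Real.log 2 := by
    rw [hp, Real.log_div (by linarith) two_ne_zero]
  have hlq : Real.log q = Real.log (1 - x) - Real.log 2 := by
    rw [hq, Real.log_div (by linarith) two_ne_zero]
  have e : p * (z - Real.log p) + q * (-z - Real.log q)
      = (p - q) * z - p * Real.log (1 + x) - q * Real.log (1 - x)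
        + (p + q) * Real.log 2 := by rw [hlp, hlq]; ring
  rw [hpq, hpmq, one_mul] at e
  rw [e] at key
  linarith [key]

lemma attained {x : ℝ} (hx : |x| < 1) :
    ∃ z : ℝ, x * z - Real.log (Real.cosh z)
      = (1 + x) / 2 * Real.log (1 + x) + (1 - x) / 2 * Real.log (1 - x) := by
  have hx1 : -1 < x := (abs_lt.mp hx).1
  have hx2 : x < 1 := (abs_lt.mp hx).2
  have ha : (0:ℝ) < 1 + x := by linarith
  have hb : (0:ℝ) < 1 - x := by linarith
  set u := Real.sqrt ((1 + x) / (1 - x)) with hu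
  have hu0 : 0 < u := Real.sqrt_pos.mpr (by positivity)
  refine ⟨Real.log u, ?_⟩
  have hcosh : Real.cosh (Real.log u) = (Real.sqrt ((1 + x) * (1 - x)))⁻¹ := by
    rw [Real.cosh_log hu0]
    have hsq : u ^ 2 = (1 + x) / (1 - x) := Real.sq_sqrt (by positivity)
    have hbu : (1 - x) * u = Real.sqrt ((1 + x) * (1 - x)) := by
      rw [hu, show (1 - x) = Real.sqrt ((1 - x) ^ 2) by
        rw [Real.sqrt_sq hb.le], ← Real.sqrt_mul (by positivity)]
      congr 1
      field_simp
      rw [Real.sq_sqrt (by nlinarith)]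
    have hs0 : 0 < Real.sqrt ((1 + x) * (1 - x)) := Real.sqrt_pos.mpr (by positivity)
    have huu : (u + u⁻¹) * u = u ^ 2 + 1 := by field_simp
    have key : (u + u⁻¹) / 2 * Real.sqrt ((1 + x) * (1 - x)) = 1 := by
      rw [← hbu]
      calc (u + u⁻¹) / 2 * ((1 - x) * u) = (u + u⁻¹) * u * (1 - x) / 2 := by ring
        _ = (u ^ 2 + 1) * (1 - x) / 2 := by rw [huu]
        _ = 1 := by rw [hsq]; field_simp; ring
    field_simp at key ⊢
    linarith [key]
  rw [hcosh, hu, Real.log_inv,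
      Real.log_sqrt (by positivity : (0:ℝ) ≤ (1 + x) * (1 - x)),
      Real.log_sqrt (by positivity : (0:ℝ) ≤ (1 + x) / (1 - x)),
      Real.log_mul ha.ne' hb.ne', Real.log_div ha.ne' hb.ne']
  ring

theorem stmt_6 (β h : ℝ) (hβ : 0 < β) (x : ℝ) (hx : |x| < 1) :
    sSup (Set.range fun y : ℝ => x * y - Real.log (Real.cosh (y + β * h)))
      = ((1 + x) / 2 * Real.log (1 + x) + (1 - x) / 2 * Real.log (1 - x)) - β * h * x := by
  apply IsGreatest.csSup_eq
  constructor
  · obtain ⟨z, hz⟩ := attained hx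
    refine ⟨z - β * h, ?_⟩
    show x * (z - β * h) - Real.log (Real.cosh (z - β * h + β * h))
        = (1 + x) / 2 * Real.log (1 + x) + (1 - x) / 2 * Real.log (1 - x) - β * h * x
    rw [sub_add_cancel, ← hz]; ring
  · rintro v ⟨y, rfl⟩
    have := ub hx (y + β * h)
    nlinarith [this]
end

section
/- With f(y) = ln cosh(y + βh), the Legendre–Fenchel transform satisfies f*(x) = ln 2 − βhx if |x| = 1, and f*(x) = +∞ if |x| > 1. -/
-- log cosh t ≤ |t|
lemma logcosh_le_abs (t : ℝ) : Real.log (Real.cosh t) ≤ |t| := by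
  have h1 : Real.cosh t ≤ Real.exp |t| := by
    rw [Real.cosh_eq]
    have := Real.exp_le_exp.mpr (le_abs_self t)
    have := Real.exp_le_exp.mpr (neg_le_abs t)
    linarith
  calc Real.log (Real.cosh t) ≤ Real.log (Real.exp |t|) :=
        Real.log_le_log (Real.cosh_pos t) h1
    _ = |t| := Real.log_exp _

-- key identity for x = ±1
lemma logcosh_key (x t : ℝ) (hx : x = 1 ∨ x = -1) :
    Real.log (Real.cosh t) = x * t + Real.log (1 + Real.exp (-(2 * (x * t)))) - Real.log 2 := by
  have hmul : Real.exp (x * t) * (1 + Real.exp (-(2 * (x * t)))) = Real.exp t + Real.exp (-t) := by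
    rw [mul_add, mul_one, ← Real.exp_add]
    rcases hx with rfl | rfl <;> norm_num <;> ring_nf
  have hc : Real.cosh t = Real.exp (x * t) * (1 + Real.exp (-(2 * (x * t)))) / 2 := by
    rw [Real.cosh_eq, hmul]
  rw [hc, Real.log_div (by positivity) (by norm_num),
    Real.log_mul (Real.exp_ne_zero _) (by positivity), Real.log_exp]

theorem stmt_7 (β h : ℝ) (hβ : 0 < β) (x : ℝ) :
    (|x| = 1 →
      (⨆ y : ℝ, ((x * y - Real.log (Real.cosh (y + β * h)) : ℝ) : EReal))
        = ((Real.log 2 - β * h * x : ℝ) : EReal)) ∧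
    (1 < |x| →
      (⨆ y : ℝ, ((x * y - Real.log (Real.cosh (y + β * h)) : ℝ) : EReal)) = ⊤) := by
  constructor
  · intro hx
    have hx' : x = 1 ∨ x = -1 := by
      rcases abs_eq (by norm_num : (0:ℝ) ≤ 1) |>.mp hx with h1 | h1 <;> [left; right] <;> exact h1
    have hx2 : x * x = 1 := by rcases hx' with rfl | rfl <;> norm_num
    have key : ∀ y : ℝ, x * y - Real.log (Real.cosh (y + β * h)) =
        Real.log 2 - β * h * x - Real.log (1 + Real.exp (-(2 * (x * (y + β * h))))) := by
      intro y
      rw [logcosh_key x (y + β * h) hx']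
      ring
    apply le_antisymm
    · apply iSup_le
      intro y
      rw [key y, EReal.coe_le_coe_iff]
      have h1 : 0 ≤ Real.log (1 + Real.exp (-(2 * (x * (y + β * h))))) :=
        Real.log_nonneg (by nlinarith [Real.exp_pos (-(2 * (x * (y + β * h))))])
      linarith
    · apply le_of_forall_lt
      intro c hc
      induction c using EReal.rec with
      | bot =>
        exact lt_of_lt_of_le (EReal.bot_lt_coe _) (le_iSup (fun y : ℝ =>
          ((x * y - Real.log (Real.cosh (y + β * h)) : ℝ) : EReal)) 0)
      | top => exact absurd hc (by simp)
      | coe c =>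
        rw [EReal.coe_lt_coe_iff] at hc
        set δ : ℝ := Real.log 2 - β * h * x - c with hδdef
        have hδ : 0 < δ := by simp only [hδdef]; linarith
        set y : ℝ := x * (1 - Real.log δ / 2) - β * h with hydef
        have hu : x * (y + β * h) = 1 - Real.log δ / 2 := by
          simp only [hydef]
          have e : x * (x * (1 - Real.log δ / 2) - β * h + β * h)
              = x * x * (1 - Real.log δ / 2) := by ring
          rw [e, hx2, one_mul]
        refine lt_of_lt_of_le ?_ (le_iSup (fun y : ℝ =>
          ((x * y - Real.log (Real.cosh (y + β * h)) : ℝ) : EReal)) y)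
        rw [EReal.coe_lt_coe_iff, key y, hu]
        have hlog : Real.log (1 + Real.exp (-(2 * (1 - Real.log δ / 2)))) ≤
            Real.exp (-(2 * (1 - Real.log δ / 2))) := by
          have := Real.log_le_sub_one_of_pos
            (x := 1 + Real.exp (-(2 * (1 - Real.log δ / 2)))) (by positivity)
          linarith
        have hexp : Real.exp (-(2 * (1 - Real.log δ / 2))) < δ := by
          have : Real.exp (-(2 * (1 - Real.log δ / 2))) = Real.exp (-2) * δ := by
            rw [show -(2 * (1 - Real.log δ / 2)) = -2 + Real.log δ by ring,
              Real.exp_add, Real.exp_log hδ]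
          rw [this]
          nlinarith [Real.exp_lt_one_iff.mpr (by norm_num : (-2:ℝ) < 0), Real.exp_pos (-2:ℝ)]
        simp only [hδdef] at hexp
        linarith
  · intro hx
    rw [iSup_eq_top]
    intro b hb
    induction b using EReal.rec with
    | bot => exact ⟨0, EReal.bot_lt_coe _⟩
    | top => exact absurd hb (lt_irrefl _)
    | coe b =>
      have hx0 : |x| ≠ 0 := by positivity
      set z : ℝ := max 0 ((b + |β * h| + 1) / (|x| - 1)) with hzdef
      have hz0 : 0 ≤ z := le_max_left _ _
      set y : ℝ := x / |x| * z with hydef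
      have hxy : x * y = |x| * z := by
        rw [hydef]
        field_simp
        nlinarith [sq_abs x]
      have hay : |y| = z := by
        rw [hydef, abs_mul, abs_div, abs_abs, div_self hx0, one_mul, abs_of_nonneg hz0]
      refine ⟨y, ?_⟩
      rw [EReal.coe_lt_coe_iff]
      have h1 : Real.log (Real.cosh (y + β * h)) ≤ |y| + |β * h| :=
        (logcosh_le_abs _).trans (abs_add_le _ _)
      have h2 : b < |x| * z - (z + |β * h|) := by
        rcases le_or_gt ((b + |β * h| + 1) / (|x| - 1)) 0 with hle | hlt
        · have hz : z = 0 := by rw [hzdef, max_eq_left hle]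
          have hden : (0:ℝ) < |x| - 1 := by linarith
          have hnum : b + |β * h| + 1 ≤ 0 := by
            by_contra hpos
            push_neg at hpos
            exact absurd (div_pos hpos hden) (by linarith)
          nlinarith [abs_nonneg x]
        · have hz : z = (b + |β * h| + 1) / (|x| - 1) := by
            rw [hzdef, max_eq_right hlt.le]
          have : (|x| - 1) * z = b + |β * h| + 1 := by
            rw [hz, mul_div_cancel₀ _ (by linarith : |x| - 1 ≠ 0)]
          nlinarith
      rw [hxy]
      linarith
end

section
/- If f : ℝ → ℝ is convex and differentiable, then the function J(x) = f*(x) − βx²/2 (with f* the Legendre–Fenchel transform, J = +∞ where f* = +∞) and the function G(x) = (β/2)x² − f(βx) have the same set of global minimizers and inf J = −inf G + appropriate constant; in particular the global minima of the LDP rate function I(x) = J(x) − inf J coincide with the global minima of G. -/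
/-- Tangent line of a convex differentiable function lies below the graph. -/
lemma tangent_le_aux (f : ℝ → ℝ) (hconv : ConvexOn ℝ Set.univ f)
    (hdiff : Differentiable ℝ f) (a y : ℝ) :
    f a + deriv f a * (y - a) ≤ f y := by
  rcases lt_trichotomy a y with h | rfl | h
  · have := hconv.deriv_le_slope (Set.mem_univ a) (Set.mem_univ y) h (hdiff a)
    rw [slope_def_field] at this
    have hy : 0 < y - a := by linarith
    rw [le_div_iff₀ (by linarith : (0:ℝ) < y - a)] at this
    linarith
  · simp
  · have := hconv.slope_le_deriv (Set.mem_univ y) (Set.mem_univ a) h (hdiff a)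
    rw [slope_def_field, div_le_iff₀ (by linarith : (0:ℝ) < a - y)] at this
    nlinarith

theorem stmt_11 (β : ℝ) (hβ : 0 < β) (f : ℝ → ℝ)
    (hconv : ConvexOn ℝ Set.univ f) (hdiff : Differentiable ℝ f)
    (hlip : LipschitzWith 1 f)
    -- the Legendre–Fenchel transform of f, valued in the extended reals
    (fstar : ℝ → EReal) (hfstar : ∀ x, fstar x = ⨆ y : ℝ, ((x * y - f y : ℝ) : EReal))
    -- J(x) = f*(x) − βx²/2
    (J : ℝ → EReal) (hJ : ∀ x, J x = fstar x - ((β * x ^ 2 / 2 : ℝ) : EReal))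
    -- G(x) = (β/2)x² − f(βx)
    (G : ℝ → ℝ) (hG : ∀ x, G x = β / 2 * x ^ 2 - f (β * x)) :
    {x : ℝ | ∀ y : ℝ, J x ≤ J y} = {x : ℝ | ∀ y : ℝ, G x ≤ G y} := by
  have hfstar_ge : ∀ x z : ℝ, ((x * z - f z : ℝ) : EReal) ≤ fstar x := by
    intro x z
    rw [hfstar]
    exact le_iSup (fun y : ℝ => ((x * y - f y : ℝ) : EReal)) z
  -- G ≤ J pointwise
  have hJG : ∀ x, (G x : EReal) ≤ J x := by
    intro x
    rw [hJ, hG]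
    have h1 := hfstar_ge x (β * x)
    have key : ((β / 2 * x ^ 2 - f (β * x) : ℝ) : EReal)
        = ((x * (β * x) - f (β * x) : ℝ) : EReal) - ((β * x ^ 2 / 2 : ℝ) : EReal) := by
      rw [← EReal.coe_sub]
      norm_cast
      ring
    rw [key]
    exact EReal.sub_le_sub h1 le_rfl
  -- at a minimizer of G, J = G
  have hGdiff : ∀ x : ℝ, HasDerivAt G (β * x - β * deriv f (β * x)) x := by
    intro x
    have h1 : HasDerivAt (fun x : ℝ => β / 2 * x ^ 2) (β / 2 * (2 * x)) x := by
      simpa using ((hasDerivAt_pow 2 x).const_mul (β / 2))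
    have h2 : HasDerivAt (fun x : ℝ => f (β * x)) (deriv f (β * x) * β) x := by
      have := ((hdiff (β * x)).hasDerivAt).comp x
        ((hasDerivAt_id x).const_mul β)
      simpa [Function.comp_def] using this
    have heq : HasDerivAt (fun x => β / 2 * x ^ 2 - f (β * x))
        (β / 2 * (2 * x) - deriv f (β * x) * β) x := h1.sub h2
    have : G = fun x => β / 2 * x ^ 2 - f (β * x) := funext hG
    rw [this]
    convert heq using 1
    ring
  have hmin : ∀ x₀ : ℝ, (∀ y, G x₀ ≤ G y) → J x₀ = ((G x₀ : ℝ) : EReal) := by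
    intro x₀ hx₀
    have hloc : IsLocalMin G x₀ := by
      apply IsMinOn.isLocalMin (s := Set.univ)
      · intro y _; exact hx₀ y
      · exact Filter.univ_mem
    have hd0 : β * x₀ - β * deriv f (β * x₀) = 0 := by
      have := hloc.deriv_eq_zero
      rwa [(hGdiff x₀).deriv] at this
    have hderiv : deriv f (β * x₀) = x₀ := by
      rcases mul_eq_zero.mp (show β * (x₀ - deriv f (β * x₀)) = 0 by linarith) with h | h
      · exact absurd h hβ.ne'
      · linarith
    -- Fenchel equality at x₀
    have htang : ∀ y : ℝ, x₀ * y - f y ≤ x₀ * (β * x₀) - f (β * x₀) := by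
      intro y
      have := tangent_le_aux f hconv hdiff (β * x₀) y
      rw [hderiv] at this
      nlinarith [this]
    have hfs : fstar x₀ = ((x₀ * (β * x₀) - f (β * x₀) : ℝ) : EReal) := by
      refine le_antisymm ?_ (hfstar_ge x₀ (β * x₀))
      rw [hfstar]
      exact iSup_le fun y => EReal.coe_le_coe_iff.2 (htang y)
    rw [hJ, hfs, ← EReal.coe_sub, EReal.coe_eq_coe_iff, hG]
    ring
  -- existence of a minimizer of G
  have hGcont : Continuous G := by
    have : G = fun x => β / 2 * x ^ 2 - f (β * x) := funext hG
    rw [this]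
    exact (continuous_const.mul (continuous_pow 2)).sub
      (hdiff.continuous.comp (continuous_const.mul continuous_id))
  have hcoer : Filter.Tendsto G (Filter.cocompact ℝ) Filter.atTop := by
    have hbound : ∀ x : ℝ, β / 2 * |x| ^ 2 - β * |x| - |f 0| ≤ G x := by
      intro x
      have hl : |f (β * x) - f 0| ≤ β * |x| := by
        have := hlip.dist_le_mul (β * x) 0
        simpa [Real.dist_eq, abs_mul, abs_of_pos hβ] using this
      have h1 : f (β * x) ≤ |f 0| + β * |x| := by
        have := (abs_le.mp hl).2
        have : f (β * x) ≤ f 0 + β * |x| := by linarith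
        have h3 : f 0 ≤ |f 0| := le_abs_self _
        linarith
      rw [hG]
      have : |x| ^ 2 = x ^ 2 := sq_abs x
      nlinarith
    apply Filter.tendsto_atTop_mono hbound
    have h2 : Filter.Tendsto (fun t : ℝ => β / 2 * t ^ 2 - β * t - |f 0|)
        Filter.atTop Filter.atTop := by
      have : Filter.Tendsto (fun t : ℝ => t * (β / 2 * t - β) - |f 0|)
          Filter.atTop Filter.atTop := by
        apply Filter.tendsto_atTop_add_const_right
        apply Filter.Tendsto.atTop_mul_atTop₀ Filter.tendsto_id
        apply Filter.tendsto_atTop_add_const_right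
        exact ((Filter.tendsto_id (α := ℝ)).const_mul_atTop (by linarith : (0:ℝ) < β / 2))
      refine this.congr fun t => by ring
    exact h2.comp (tendsto_norm_cocompact_atTop (E := ℝ))
  obtain ⟨x₀, hx₀min⟩ := hGcont.exists_forall_le hcoer
  ext x
  simp only [Set.mem_setOf_eq]
  constructor
  · intro hx y
    have h1 : J x ≤ ((G x₀ : ℝ) : EReal) := (hx x₀).trans_eq (hmin x₀ hx₀min)
    have h2 : ((G x : ℝ) : EReal) ≤ ((G x₀ : ℝ) : EReal) := (hJG x).trans h1
    have h3 : G x = G x₀ := le_antisymm (EReal.coe_le_coe_iff.1 h2) (hx₀min x)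
    rw [h3]
    exact hx₀min y
  · intro hx y
    rw [hmin x hx]
    exact (EReal.coe_le_coe_iff.2 (hx y)).trans (hJG y)
end

section
/- In the classical Curie–Weiss model (h_i ≡ h), the rate function of the LDP for S_n/n equals I(x) = −(β/2)x² − βhx + I₀(x) − inf_y {−(β/2)y² − βhy + I₀(y)}, where I₀(x) = ((1+x)/2)ln(1+x) + ((1−x)/2)ln(1−x) for |x| ≤ 1 (with value ln 2 at |x| = 1) and I₀(x) = ∞ for |x| > 1. -/
/-- EReal helper: iSup of coerced real function equals a real value. -/
private lemma isup_coe_eq (g : ℝ → ℝ) (a : ℝ) (hub : ∀ y, g y ≤ a)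
    (happ : ∀ t, t < a → ∃ y, t < g y) :
    (⨆ y : ℝ, ((g y : ℝ) : EReal)) = (a : EReal) := by
  apply le_antisymm
  · exact iSup_le fun y => EReal.coe_le_coe_iff.2 (hub y)
  · rw [le_iSup_iff]
    intro b hb
    induction b using EReal.rec with
    | bot => exact absurd (hb 0) (by simp)
    | coe r =>
      rw [EReal.coe_le_coe_iff]
      by_contra hr
      push_neg at hr
      obtain ⟨y, hy⟩ := happ r hr
      exact absurd (hb y) (by simpa using hy)
    | top => exact le_top

private lemma isup_coe_top (g : ℝ → ℝ) (h : ∀ t : ℝ, ∃ y, t < g y) :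
    (⨆ y : ℝ, ((g y : ℝ) : EReal)) = ⊤ := by
  rw [iSup_eq_top]
  intro b hb
  induction b using EReal.rec with
  | bot => exact ⟨0, by simp⟩
  | coe r =>
    obtain ⟨y, hy⟩ := h r
    exact ⟨y, EReal.coe_lt_coe_iff.2 hy⟩
  | top => exact absurd hb (lt_irrefl ⊤)

private lemma lc_abs (z : ℝ) : Real.log (Real.cosh z) ≤ |z| := by
  rw [Real.log_le_iff_le_exp (Real.cosh_pos z), Real.cosh_eq]
  have h1 : Real.exp z ≤ Real.exp |z| := Real.exp_le_exp.2 (le_abs_self z)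
  have h2 : Real.exp (-z) ≤ Real.exp |z| := Real.exp_le_exp.2 (neg_le_abs z)
  linarith

private lemma lc_ge (z : ℝ) : z - Real.log 2 ≤ Real.log (Real.cosh z) := by
  have h : Real.exp z / 2 ≤ Real.cosh z := by
    rw [Real.cosh_eq]; have := Real.exp_pos (-z); linarith
  calc z - Real.log 2 = Real.log (Real.exp z / 2) := by
        rw [Real.log_div (Real.exp_ne_zero z) two_ne_zero, Real.log_exp]
    _ ≤ Real.log (Real.cosh z) :=
        Real.log_le_log (by positivity) h

private lemma lc_ub (z : ℝ) :
    Real.log (Real.cosh z) ≤ z + Real.exp (-2 * z) - Real.log 2 := by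
  have h1 : Real.cosh z = Real.exp z * (1 + Real.exp (-2 * z)) / 2 := by
    rw [Real.cosh_eq, mul_add, mul_one, ← Real.exp_add,
      show z + -2 * z = -z from by ring]
  have hpos : (0:ℝ) < 1 + Real.exp (-2 * z) := by positivity
  have h2 : Real.log (1 + Real.exp (-2 * z)) ≤ Real.exp (-2 * z) := by
    have := Real.log_le_sub_one_of_pos hpos
    linarith
  rw [h1, Real.log_div (by positivity) two_ne_zero,
    Real.log_mul (Real.exp_ne_zero z) (ne_of_gt hpos), Real.log_exp]
  linarith

/-- The core inequality: for |x| < 1, x z − log cosh z ≤ entropy(x). -/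
private lemma logcosh_bound (x z : ℝ) (hx : |x| < 1) :
    x * z - Real.log (Real.cosh z) ≤
      (1 + x) / 2 * Real.log (1 + x) + (1 - x) / 2 * Real.log (1 - x) := by
  rw [abs_lt] at hx
  set p := (1 + x) / 2 with hp_def
  set q := (1 - x) / 2 with hq_def
  have hp : 0 < p := by simp only [hp_def]; linarith
  have hq : 0 < q := by simp only [hq_def]; linarith
  have hpq : p + q = 1 := by simp only [hp_def, hq_def]; ring
  have hAM := Real.geom_mean_le_arith_mean2_weighted hp.le hq.le
    (le_of_lt (div_pos (Real.exp_pos z) hp)) (le_of_lt (div_pos (Real.exp_pos (-z)) hq)) hpq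
  have hrhs : p * (Real.exp z / p) + q * (Real.exp (-z) / q) = 2 * Real.cosh z := by
    rw [Real.cosh_eq]; field_simp
  rw [hrhs] at hAM
  have hL : (0:ℝ) < (Real.exp z / p) ^ p * (Real.exp (-z) / q) ^ q := by
    apply mul_pos <;> exact Real.rpow_pos_of_pos (by positivity) _
  have hlog := Real.log_le_log hL hAM
  rw [Real.log_mul (ne_of_gt (Real.rpow_pos_of_pos (by positivity) _))
        (ne_of_gt (Real.rpow_pos_of_pos (by positivity) _)),
      Real.log_rpow (by positivity), Real.log_rpow (by positivity),
      Real.log_div (Real.exp_ne_zero _) hp.ne', Real.log_div (Real.exp_ne_zero _) hq.ne',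
      Real.log_exp, Real.log_exp,
      Real.log_mul two_ne_zero (Real.cosh_pos z).ne'] at hlog
  have hlp : Real.log p = Real.log (1 + x) - Real.log 2 := by
    rw [hp_def, Real.log_div (by linarith) two_ne_zero]
  have hlq : Real.log q = Real.log (1 - x) - Real.log 2 := by
    rw [hq_def, Real.log_div (by linarith) two_ne_zero]
  have hx' : p - q = x := by simp only [hp_def, hq_def]; ring
  rw [hlp, hlq] at hlog
  have hxz : p * z - q * z = x * z := by rw [← sub_mul, hx']
  have hlog2 : p * Real.log 2 + q * Real.log 2 = Real.log 2 := by
    rw [← add_mul, hpq, one_mul]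
  nlinarith [hlog, hxz, hlog2]

private lemma exp_half_log {a : ℝ} (ha : 0 < a) : Real.exp (Real.log a / 2) = Real.sqrt a := by
  rw [← Real.log_sqrt ha.le, Real.exp_log (Real.sqrt_pos.2 ha)]

/-- The value is attained at z₀ = artanh x. -/
private lemma logcosh_attain (x : ℝ) (hx : |x| < 1) :
    x * ((Real.log (1 + x) - Real.log (1 - x)) / 2)
      - Real.log (Real.cosh ((Real.log (1 + x) - Real.log (1 - x)) / 2)) =
      (1 + x) / 2 * Real.log (1 + x) + (1 - x) / 2 * Real.log (1 - x) := by
  rw [abs_lt] at hx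
  have ha : (0:ℝ) < 1 + x := by linarith
  have hb : (0:ℝ) < 1 - x := by linarith
  set z := (Real.log (1 + x) - Real.log (1 - x)) / 2 with hz
  have hsa : (0:ℝ) < Real.sqrt (1 + x) := Real.sqrt_pos.2 ha
  have hsb : (0:ℝ) < Real.sqrt (1 - x) := Real.sqrt_pos.2 hb
  have hez : Real.exp z = Real.sqrt (1 + x) / Real.sqrt (1 - x) := by
    rw [hz]
    have : (Real.log (1 + x) - Real.log (1 - x)) / 2
        = Real.log (1 + x) / 2 - Real.log (1 - x) / 2 := by ring
    rw [this, Real.exp_sub, exp_half_log ha, exp_half_log hb]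
  have henz : Real.exp (-z) = Real.sqrt (1 - x) / Real.sqrt (1 + x) := by
    rw [Real.exp_neg, hez, inv_div]
  have hcosh : Real.cosh z = (Real.sqrt (1 + x) * Real.sqrt (1 - x))⁻¹ := by
    rw [Real.cosh_eq, hez, henz]
    have h1 : Real.sqrt (1 + x) * Real.sqrt (1 + x) = 1 + x := Real.mul_self_sqrt ha.le
    have h2 : Real.sqrt (1 - x) * Real.sqrt (1 - x) = 1 - x := Real.mul_self_sqrt hb.le
    field_simp
    nlinarith [h1, h2]
  have hlc : Real.log (Real.cosh z) = -(Real.log (1 + x) + Real.log (1 - x)) / 2 := by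
    rw [hcosh, Real.log_inv, Real.log_mul hsa.ne' hsb.ne',
      Real.log_sqrt ha.le, Real.log_sqrt hb.le]
    ring
  rw [hlc, hz]; ring

/-- Key computation of the Legendre transform. -/
private lemma key (c x : ℝ) :
    (⨆ y : ℝ, ((x * y - Real.log (Real.cosh (y + c)) : ℝ) : EReal))
      = ((-(c * x) : ℝ) : EReal) +
        (if |x| < 1 then
          (((1 + x) / 2 * Real.log (1 + x) + (1 - x) / 2 * Real.log (1 - x) : ℝ) : EReal)
         else if |x| = 1 then ((Real.log 2 : ℝ) : EReal) else ⊤) := by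
  rcases lt_trichotomy |x| 1 with hlt | heq | hgt
  · rw [if_pos hlt, ← EReal.coe_add]
    apply isup_coe_eq
    · intro y
      have := logcosh_bound x (y + c) hlt
      nlinarith [this]
    · intro t ht
      set z := (Real.log (1 + x) - Real.log (1 - x)) / 2 with hz
      refine ⟨z - c, ?_⟩
      have hval := logcosh_attain x hlt
      rw [← hz] at hval
      have heq2 : x * (z - c) - Real.log (Real.cosh (z - c + c))
          = -(c * x) + ((1 + x) / 2 * Real.log (1 + x) + (1 - x) / 2 * Real.log (1 - x)) := by
        rw [show z - c + c = z from by ring]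
        linear_combination hval
      rw [heq2]; exact ht
  · rw [if_neg (by simp [heq]), if_pos heq, ← EReal.coe_add]
    apply isup_coe_eq
    · intro y
      have h1 := lc_ge (y + c)
      have h2 := lc_ge (-(y + c))
      rw [Real.cosh_neg] at h2
      rcases abs_eq (by norm_num : (0:ℝ) ≤ 1) |>.1 heq with h | h
      · rw [h]; nlinarith
      · rw [h]; nlinarith
    · intro t ht
      rcases abs_eq (by norm_num : (0:ℝ) ≤ 1) |>.1 heq with h | h
      · subst h
        set δ := Real.log 2 - c * 1 + -(c * 1) - t with hδ
        have hδ' : 0 < Real.log 2 + -(c * 1) - t := by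
          have := ht; linarith
        set d := Real.log 2 + -(c * 1) - t with hd
        refine ⟨-c - Real.log d / 2 + 1, ?_⟩
        set y := -c - Real.log d / 2 + 1 with hy
        have hub := lc_ub (y + c)
        have hexp : Real.exp (-2 * (y + c)) = d * Real.exp (-2) := by
          rw [hy]
          have : -2 * (-c - Real.log d / 2 + 1 + c) = Real.log d + -2 := by ring
          rw [this, Real.exp_add, Real.exp_log hδ']
        have hsmall : d * Real.exp (-2) < d := by
          have h2 : Real.exp (-2:ℝ) < 1 := Real.exp_lt_one_iff.2 (by norm_num)
          nlinarith
        have : 1 * y - Real.log (Real.cosh (y + c)) ≥ y - (y + c + Real.exp (-2*(y+c)) - Real.log 2) := by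
          nlinarith [hub]
        rw [hexp] at this
        simp only [hd] at this hsmall
        nlinarith
      · subst h
        have hδ' : 0 < Real.log 2 + -(c * (-1)) - t := by
          have := ht; linarith
        set d := Real.log 2 + -(c * (-1)) - t with hd
        refine ⟨-c + Real.log d / 2 - 1, ?_⟩
        set y := -c + Real.log d / 2 - 1 with hy
        have hub := lc_ub (-(y + c))
        rw [Real.cosh_neg] at hub
        have hexp : Real.exp (-2 * (-(y + c))) = d * Real.exp (-2) := by
          rw [hy]
          have : -2 * (-(-c + Real.log d / 2 - 1 + c)) = Real.log d + -2 := by ring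
          rw [this, Real.exp_add, Real.exp_log hδ']
        have hsmall : d * Real.exp (-2) < d := by
          have h2 : Real.exp (-2:ℝ) < 1 := Real.exp_lt_one_iff.2 (by norm_num)
          nlinarith
        have : (-1) * y - Real.log (Real.cosh (y + c)) ≥
            -y - (-(y + c) + Real.exp (-2 * (-(y+c))) - Real.log 2) := by
          nlinarith [hub]
        rw [hexp] at this
        simp only [hd] at this hsmall
        nlinarith
  · rw [if_neg (by linarith), if_neg (by linarith)]
    have htop : ((-(c * x) : ℝ) : EReal) + (⊤ : EReal) = ⊤ := by
      exact EReal.coe_add_top _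
    rw [htop]
    apply isup_coe_top
    intro t
    rcases lt_or_ge x 0 with hneg | hpos
    · -- x < -1
      have hx1 : x < -1 := by
        rcases abs_cases x with ⟨h1, _⟩ | ⟨h1, _⟩
        · linarith
        · linarith
      set M := max (1 + |c|) ((t + |c| + 1) / (-x - 1)) with hM
      refine ⟨-M, ?_⟩
      have hM1 : 1 + |c| ≤ M := le_max_left _ _
      have hM2 : (t + |c| + 1) / (-x - 1) ≤ M := le_max_right _ _
      have hxm : 0 < -x - 1 := by linarith
      have hMm : t + |c| + 1 ≤ M * (-x - 1) := (div_le_iff₀ hxm).1 hM2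
      have hc : |c| ≥ c := le_abs_self c
      have hc' : |c| ≥ -c := neg_le_abs c
      have hyc : -M + c < 0 := by
        have : 0 ≤ |c| := abs_nonneg c
        linarith
      have habs := lc_abs (-M + c)
      rw [abs_of_neg hyc] at habs
      nlinarith
    · -- x > 1
      have hx1 : 1 < x := by
        rcases abs_cases x with ⟨h1, _⟩ | ⟨h1, _⟩
        · linarith
        · linarith
      set M := max (1 + |c|) ((t + |c| + 1) / (x - 1)) with hM
      refine ⟨M, ?_⟩
      have hM1 : 1 + |c| ≤ M := le_max_left _ _
      have hM2 : (t + |c| + 1) / (x - 1) ≤ M := le_max_right _ _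
      have hxm : 0 < x - 1 := by linarith
      have hMm : t + |c| + 1 ≤ M * (x - 1) := (div_le_iff₀ hxm).1 hM2
      have hc : |c| ≥ c := le_abs_self c
      have hc' : |c| ≥ -c := neg_le_abs c
      have hyc : 0 < M + c := by
        have : 0 ≤ |c| := abs_nonneg c
        linarith
      have habs := lc_abs (M + c)
      rw [abs_of_pos hyc] at habs
      nlinarith

theorem stmt_12 (β h : ℝ) (hβ : 0 < β)
    -- the Legendre–Fenchel transform of f(y) = ln cosh(y + βh)
    (fstar : ℝ → EReal)
    (hfstar : ∀ x, fstar x = ⨆ y : ℝ, ((x * y - Real.log (Real.cosh (y + β * h)) : ℝ) : EReal))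
    -- I₀, the entropy function
    (I₀ : ℝ → EReal)
    (hI₀ : ∀ x, I₀ x =
      if |x| < 1 then
        (((1 + x) / 2 * Real.log (1 + x) + (1 - x) / 2 * Real.log (1 - x) : ℝ) : EReal)
      else if |x| = 1 then ((Real.log 2 : ℝ) : EReal) else ⊤)
    -- the rate function of the LDP: I(x) = f*(x) − βx²/2 − inf_y {f*(y) − βy²/2}
    (I : ℝ → EReal)
    (hI : ∀ x, I x = fstar x - ((β * x ^ 2 / 2 : ℝ) : EReal)
      - ⨅ y : ℝ, (fstar y - ((β * y ^ 2 / 2 : ℝ) : EReal))) :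
    ∀ x : ℝ, I x = ((-(β / 2) * x ^ 2 - β * h * x : ℝ) : EReal) + I₀ x
      - ⨅ y : ℝ, (((-(β / 2) * y ^ 2 - β * h * y : ℝ) : EReal) + I₀ y) := by
  have hfs : ∀ u : ℝ, fstar u = ((-(β * h * u) : ℝ) : EReal) + I₀ u := by
    intro u
    rw [hfstar u, hI₀ u, key (β * h) u]
  have rearr : ∀ u : ℝ, fstar u - ((β * u ^ 2 / 2 : ℝ) : EReal)
      = ((-(β / 2) * u ^ 2 - β * h * u : ℝ) : EReal) + I₀ u := by
    intro u
    rw [hfs u, sub_eq_add_neg, ← EReal.coe_neg, add_right_comm, ← EReal.coe_add]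
    have : -(β * h * u) + -(β * u ^ 2 / 2) = -(β / 2) * u ^ 2 - β * h * u := by ring
    rw [this]
  intro x
  rw [hI x, rearr x, iInf_congr rearr]
end
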